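/- arXiv:2110.07959 — 6 statements merged into one kernel-verified Lean document; each statement's English description precedes it below -/
import Mathlib

section
/- Let M = [A, B] ∈ ℝ^{n×m} be a block matrix with A ∈ ℝ^{n×m_A}, B ∈ ℝ^{n×m_B}, rank(M) = r, rank(A) = r_A, rank(B) = r_B. For any n×n permutation matrix P with corresponding permutation π_P, rank([A, P B]) ≤ min{n, m, r_A + r_B, r + H(π_P) − C(π_P)}, where H(π_P) is the number of non-fixed points of π_P and C(π_P) is the number of cycles of π_P of length ≥ 2. -/
open Matrix

/-- Hamming weight of a permutation: number of non-fixed points. -/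
def hammingWeight {n : ℕ} (σ : Equiv.Perm (Fin n)) : ℕ := σ.support.card

/-- Cycle number: number of cycles of length ≥ 2 in the cycle decomposition. -/
def cycleNumber {n : ℕ} (σ : Equiv.Perm (Fin n)) : ℕ := Multiset.card σ.cycleType

namespace RankPermAux

lemma permMatrix_apply {n : ℕ} (σ : Equiv.Perm (Fin n)) (i j : Fin n) :
    σ.permMatrix ℝ i j = if σ i = j then 1 else 0 := by
  simp only [Equiv.Perm.permMatrix, PEquiv.toMatrix_apply, Equiv.toPEquiv_apply,
    Option.mem_def, Option.some.injEq]

lemma cycleNumber_le_hammingWeight {n : ℕ} (σ : Equiv.Perm (Fin n)) :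
    cycleNumber σ ≤ hammingWeight σ := by
  rw [cycleNumber, hammingWeight, ← Equiv.Perm.sum_cycleType]
  simpa using Multiset.card_nsmul_le_sum (s := σ.cycleType) (a := 1)
    (fun x hx => le_trans one_le_two (Equiv.Perm.two_le_of_mem_cycleType hx))

lemma rank_add_le' {k : Type*} {l : Type*} [Fintype k] [Fintype l]
    (A B : Matrix k l ℝ) : (A + B).rank ≤ A.rank + B.rank := by
  classical
  rw [Matrix.rank, Matrix.rank, Matrix.rank, Matrix.mulVecLin_add]
  refine le_trans (Submodule.finrank_mono ?_)
    (Submodule.finrank_add_le_finrank_add_finrank _ _)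
  rintro x ⟨v, rfl⟩
  exact Submodule.add_mem_sup (LinearMap.mem_range_self _ v) (LinearMap.mem_range_self _ v)

lemma rank_permMatrix_sub_one_le_of_ne {n : ℕ} (σ : Equiv.Perm (Fin n)) (hσ : σ ≠ 1) :
    (σ.permMatrix ℝ - 1).rank ≤ σ.support.card - 1 := by
  classical
  set M : Matrix (Fin n) (Fin n) ℝ := σ.permMatrix ℝ - 1 with hM
  have hMapply : ∀ i j, M i j = (if σ i = j then (1:ℝ) else 0) - (if i = j then 1 else 0) := by
    intro i j
    rw [hM, Matrix.sub_apply, permMatrix_apply, Matrix.one_apply]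
  obtain ⟨j₀, hj₀⟩ : ∃ j, j ∈ σ.support := by
    by_contra h
    push_neg at h
    exact hσ (Equiv.Perm.support_eq_empty_iff.mp (Finset.eq_empty_of_forall_notMem h))
  -- columns outside the support vanish
  have hcol_zero : ∀ j ∉ σ.support, Mᵀ j = 0 := by
    intro j hj
    have hfix : σ j = j := Equiv.Perm.notMem_support.mp hj
    funext i
    by_cases hij : i = j
    · subst hij
      simp [Matrix.transpose_apply, hMapply, hfix]
    · have : σ i ≠ j := by
        intro h
        exact hij (σ.injective (by rw [h, hfix]))
      simp [Matrix.transpose_apply, hMapply, hij, this]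
  -- the columns over the support sum to zero
  have hsum : ∑ j ∈ σ.support, Mᵀ j = 0 := by
    funext i
    rw [Finset.sum_apply (g := fun j => (Mᵀ j : Fin n → ℝ))]
    simp only [Matrix.transpose_apply, hMapply, Pi.zero_apply]
    rw [Finset.sum_sub_distrib]
    have h1 : (∑ j ∈ σ.support, if σ i = j then (1:ℝ) else 0)
        = if σ i ∈ σ.support then 1 else 0 := by
      simp [Finset.sum_ite_eq]
    have h2 : (∑ j ∈ σ.support, if i = j then (1:ℝ) else 0)
        = if i ∈ σ.support then 1 else 0 := by
      simp [Finset.sum_ite_eq]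
    rw [h1, h2]
    simp [Equiv.Perm.apply_mem_support]
  -- the spanning finset
  set T : Finset (Fin n → ℝ) := (σ.support.erase j₀).image (fun j => Mᵀ j) with hT
  have hrange : Set.range Mᵀ ⊆ (Submodule.span ℝ (T : Set (Fin n → ℝ)) : Set (Fin n → ℝ)) := by
    rintro x ⟨j, rfl⟩
    by_cases hj : j ∈ σ.support
    · by_cases hjj : j = j₀
      · rw [hjj]
        have heq : Mᵀ j₀ = -∑ j ∈ σ.support.erase j₀, Mᵀ j := by
          have h := Finset.add_sum_erase _ (fun j => Mᵀ j) hj₀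
          rw [hsum] at h
          exact eq_neg_of_add_eq_zero_left h
        rw [heq]
        refine neg_mem (Submodule.sum_mem _ fun c hc => Submodule.subset_span ?_)
        exact Finset.mem_image_of_mem _ hc
      · exact Submodule.subset_span
          (Finset.mem_image_of_mem _ (Finset.mem_erase.mpr ⟨hjj, hj⟩))
    · rw [hcol_zero j hj]
      exact Submodule.zero_mem _
  have h1 : M.rank ≤ Module.finrank ℝ (Submodule.span ℝ (T : Set (Fin n → ℝ))) := by
    rw [Matrix.rank_eq_finrank_span_cols]
    exact Submodule.finrank_mono (Submodule.span_le.mpr hrange)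
  refine h1.trans ?_
  calc Module.finrank ℝ (Submodule.span ℝ (T : Set (Fin n → ℝ))) ≤ T.card :=
        finrank_span_finset_le_card T
    _ ≤ (σ.support.erase j₀).card := Finset.card_image_le
    _ = σ.support.card - 1 := Finset.card_erase_of_mem hj₀

lemma rank_permMatrix_sub_one_le {n : ℕ} (σ : Equiv.Perm (Fin n)) :
    (σ.permMatrix ℝ - 1).rank ≤ hammingWeight σ - cycleNumber σ := by
  classical
  induction σ using Equiv.Perm.cycle_induction_on with
  | base_one =>
      have : (1 : Equiv.Perm (Fin n)).permMatrix ℝ - 1 = 0 := by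
        ext i j
        rw [Matrix.sub_apply, permMatrix_apply, Matrix.one_apply]
        split_ifs <;> simp_all
      simp [this]
  | base_cycles σ hσ =>
      have h1 := rank_permMatrix_sub_one_le_of_ne σ hσ.ne_one
      have h2 : hammingWeight σ = σ.support.card := rfl
      have h3 : cycleNumber σ = 1 := by
        rw [cycleNumber, hσ.cycleType]
        rfl
      omega
  | induction_disjoint σ τ hd hσ ihσ ihτ =>
      have hmat : (σ * τ).permMatrix ℝ - 1 = (σ.permMatrix ℝ - 1) + (τ.permMatrix ℝ - 1) := by
        ext i j
        simp only [Matrix.sub_apply, Matrix.add_apply, permMatrix_apply, Matrix.one_apply,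
          Equiv.Perm.mul_apply]
        rcases hd i with h | h
        · have hστ : σ (τ i) = τ i ∨ τ i = i := by
            rcases hd (τ i) with h' | h'
            · exact Or.inl h'
            · exact Or.inr (τ.injective h')
          rcases hστ with h' | h'
          · simp [h, h']
          · simp [h, h']
        · simp [h]
      rw [hmat]
      have hH : hammingWeight (σ * τ) = hammingWeight σ + hammingWeight τ :=
        hd.card_support_mul
      have hC : cycleNumber (σ * τ) = cycleNumber σ + cycleNumber τ := by
        rw [cycleNumber, hd.cycleType_mul]
        simp [cycleNumber]
      have hσle := cycleNumber_le_hammingWeight σ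
      have hτle := cycleNumber_le_hammingWeight τ
      have := rank_add_le' (σ.permMatrix ℝ - 1) (τ.permMatrix ℝ - 1)
      omega

lemma rank_fromCols_zero_left {n mA mB : ℕ} (C : Matrix (Fin n) (Fin mB) ℝ) :
    (fromCols (0 : Matrix (Fin n) (Fin mA) ℝ) C).rank ≤ C.rank := by
  have h : fromCols (0 : Matrix (Fin n) (Fin mA) ℝ) C
      = C * fromCols (0 : Matrix (Fin mB) (Fin mA) ℝ) 1 := by
    rw [Matrix.mul_fromCols, Matrix.mul_zero, Matrix.mul_one]
  rw [h]
  exact Matrix.rank_mul_le_left _ _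

lemma rank_fromCols_zero_right {n mA mB : ℕ} (A : Matrix (Fin n) (Fin mA) ℝ) :
    (fromCols A (0 : Matrix (Fin n) (Fin mB) ℝ)).rank ≤ A.rank := by
  have h : fromCols A (0 : Matrix (Fin n) (Fin mB) ℝ)
      = A * fromCols 1 (0 : Matrix (Fin mA) (Fin mB) ℝ) := by
    rw [Matrix.mul_fromCols, Matrix.mul_zero, Matrix.mul_one]
  rw [h]
  exact Matrix.rank_mul_le_left _ _

end RankPermAux

open RankPermAux in
/-- For `M = [A, B]` with `rank M = r`, `rank A = r_A`, `rank B = r_B`, and any row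
permutation `P` (with permutation `π_P`), we have
`rank [A, P B] ≤ min {n, m, r_A + r_B, r + H(π_P) − C(π_P)}`. -/
theorem rank_perm_concat_le {n mA mB m r rA rB : ℕ}
    (A : Matrix (Fin n) (Fin mA) ℝ) (B : Matrix (Fin n) (Fin mB) ℝ)
    (hm : m = mA + mB)
    (hr : (fromCols A B).rank = r) (hrA : A.rank = rA) (hrB : B.rank = rB)
    (σ : Equiv.Perm (Fin n)) :
    (fromCols A (B.submatrix σ id)).rank ≤
      min (min n m) (min (rA + rB) (r + (hammingWeight σ - cycleNumber σ))) := by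
  classical
  have hBσ : B.submatrix σ id = σ.permMatrix ℝ * B :=
    (PEquiv.toMatrix_toPEquiv_mul σ B).symm
  refine le_min (le_min ?_ ?_) (le_min ?_ ?_)
  · exact le_trans (Matrix.rank_le_card_height _) (by simp)
  · refine le_trans (Matrix.rank_le_card_width _) ?_
    simp [hm]
  · -- ≤ rA + rB
    have hsplit : fromCols A (B.submatrix σ id)
        = fromCols A 0 + fromCols (0 : Matrix (Fin n) (Fin mA) ℝ) (B.submatrix σ id) := by
      ext i j
      cases j with
      | inl j => simp [fromCols]
      | inr j => simp [fromCols]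
    rw [hsplit]
    refine le_trans (rank_add_le' _ _) ?_
    have h1 : (fromCols A (0 : Matrix (Fin n) (Fin mB) ℝ)).rank ≤ rA :=
      hrA ▸ rank_fromCols_zero_right A
    have h2 : (fromCols (0 : Matrix (Fin n) (Fin mA) ℝ) (B.submatrix σ id)).rank ≤ rB := by
      refine le_trans (rank_fromCols_zero_left _) ?_
      rw [hBσ, ← hrB]
      exact Matrix.rank_mul_le_right _ _
    exact add_le_add h1 h2
  · -- ≤ r + (H - C)
    have hsplit : fromCols A (B.submatrix σ id)
        = fromCols A B
          + fromCols (0 : Matrix (Fin n) (Fin mA) ℝ) ((σ.permMatrix ℝ - 1) * B) := by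
      ext i j
      cases j with
      | inl j => simp [fromCols]
      | inr j =>
        simp only [Matrix.add_apply, fromCols, of_apply, Sum.elim_inr, Matrix.sub_mul,
          Matrix.one_mul, Matrix.sub_apply, hBσ]
        ring
    rw [hsplit]
    refine le_trans (rank_add_le' _ _) ?_
    have h2 : (fromCols (0 : Matrix (Fin n) (Fin mA) ℝ) ((σ.permMatrix ℝ - 1) * B)).rank
        ≤ hammingWeight σ - cycleNumber σ := by
      refine le_trans (rank_fromCols_zero_left _) ?_
      exact le_trans (Matrix.rank_mul_le_left _ _) (rank_permMatrix_sub_one_le σ)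
    exact add_le_add hr.le h2
end

section
/- For any block matrix [A, B] with rank(A) = r_A and any permutation matrix P, rank([A, P B]) ≤ rank([A, B]) + rank([Pa_1 − a_1, ..., Pa_{r_A} − a_{r_A}]) where a_1, ..., a_{r_A} is any basis of the column space of A extended to a basis of the column space of [A, B]. -/
open Matrix Submodule Module

/-- For any block matrix `[A, B]`, any permutation matrix `P`, and any basis
`a_1, ..., a_{r_A}` of the column space of `A` extended (by `b_1, ..., b_k`) to a basis
of the column space of `[A, B]`, we have
`rank [A, P B] ≤ rank [A, B] + rank [P a_1 − a_1, ..., P a_{r_A} − a_{r_A}]`. -/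
theorem rank_perm_concat_le_rank_add_rank_diff {n mA mB rA k : ℕ}
    (A : Matrix (Fin n) (Fin mA) ℝ) (B : Matrix (Fin n) (Fin mB) ℝ)
    (σ : Equiv.Perm (Fin n))
    (a : Fin rA → (Fin n → ℝ)) (b : Fin k → (Fin n → ℝ))
    (ha_span : Submodule.span ℝ (Set.range a) =
      Submodule.span ℝ (Set.range fun j => fun i => A i j))
    (hab_indep : LinearIndependent ℝ (Sum.elim a b))
    (hab_span : Submodule.span ℝ (Set.range (Sum.elim a b)) =
      Submodule.span ℝ (Set.range fun j => fun i => (fromCols A B) i j)) :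
    (fromCols A (B.submatrix σ id)).rank ≤
      (fromCols A B).rank +
        (Matrix.of fun i j => a j (σ i) - a j i : Matrix (Fin n) (Fin rA) ℝ).rank := by
  classical
  set P : (Fin n → ℝ) ≃ₗ[ℝ] (Fin n → ℝ) := LinearEquiv.funCongrLeft ℝ ℝ (σ : Fin n ≃ Fin n)
    with hPdef
  have hPapp : ∀ (x : Fin n → ℝ) (i : Fin n), P x i = x (σ i) := fun x i => rfl
  set S : Submodule ℝ (Fin n → ℝ) := Submodule.span ℝ (Set.range (fromCols A B)ᵀ) with hS
  set Dm : Matrix (Fin n) (Fin rA) ℝ := Matrix.of fun i j => a j (σ i) - a j i with hDm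
  set D : Submodule ℝ (Fin n → ℝ) := Submodule.span ℝ (Set.range Dmᵀ) with hD
  set C : Submodule ℝ (Fin n → ℝ) :=
    Submodule.span ℝ (Set.range (fromCols A (B.submatrix σ id))ᵀ) with hC
  -- columns of A lie in S
  have hcolA_S : ∀ j : Fin mA, (fun i => A i j) ∈ S := by
    intro j
    apply subset_span
    exact ⟨Sum.inl j, by ext i; simp [fromCols_apply_inl]⟩
  have hcolB_S : ∀ j : Fin mB, (fun i => B i j) ∈ S := by
    intro j
    apply subset_span
    exact ⟨Sum.inr j, by ext i; simp [fromCols_apply_inr]⟩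
  have ha_S : ∀ t : Fin rA, a t ∈ S := by
    intro t
    have h1 : a t ∈ Submodule.span ℝ (Set.range a) := subset_span ⟨t, rfl⟩
    rw [ha_span] at h1
    refine Submodule.span_le.mpr ?_ h1
    rintro _ ⟨j, rfl⟩
    exact hcolA_S j
  -- key
  have hd : ∀ t : Fin rA, Dmᵀ t = P (a t) - a t := by
    intro t; ext i; simp [hDm, hPapp]
  have hPsa : ∀ t : Fin rA, P.symm (a t) = a t - P.symm (Dmᵀ t) := by
    intro t
    rw [hd, map_sub, P.symm_apply_apply]; abel
  have key : C.map (P.symm : (Fin n → ℝ) →ₗ[ℝ] (Fin n → ℝ)) ≤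
      S ⊔ D.map (P.symm : (Fin n → ℝ) →ₗ[ℝ] (Fin n → ℝ)) := by
    rw [hC, Submodule.map_span, ← Set.range_comp (f := (fromCols A (B.submatrix σ id))ᵀ)]
    apply Submodule.span_le.mpr
    rintro _ ⟨j, rfl⟩
    cases j with
    | inr j =>
      have : ((P.symm : (Fin n → ℝ) →ₗ[ℝ] _) ∘ (fromCols A (B.submatrix σ id))ᵀ) (Sum.inr j)
          = (fun i => B i j) := by
        have h1 : (fromCols A (B.submatrix σ id))ᵀ (Sum.inr j) = P (fun i => B i j) := by
          ext i; simp [fromCols_apply_inr, hPapp]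
        exact (congrArg P.symm h1).trans (P.symm_apply_apply _)
      rw [this]
      exact le_sup_left (α := Submodule ℝ (Fin n → ℝ)) (hcolB_S j)
    | inl j =>
      have harg : (fromCols A (B.submatrix σ id))ᵀ (Sum.inl j) = (fun i => A i j) := by
        ext i; simp [fromCols_apply_inl]
      have h1 : ((P.symm : (Fin n → ℝ) →ₗ[ℝ] _) ∘ (fromCols A (B.submatrix σ id))ᵀ)
          (Sum.inl j) = P.symm (fun i => A i j) := by
        exact congrArg P.symm harg
      rw [h1]
      have hin : (fun i => A i j) ∈ Submodule.span ℝ (Set.range a) := by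
        rw [ha_span]; exact subset_span ⟨j, rfl⟩
      have : P.symm (fun i => A i j) ∈
          (Submodule.span ℝ (Set.range a)).map (P.symm : (Fin n → ℝ) →ₗ[ℝ] _) :=
        Submodule.mem_map_of_mem hin
      rw [Submodule.map_span, ← Set.range_comp] at this
      refine Submodule.span_le.mpr ?_ this
      rintro _ ⟨t, rfl⟩
      have : ((P.symm : (Fin n → ℝ) →ₗ[ℝ] _) ∘ a) t = a t - P.symm (Dmᵀ t) := hPsa t
      rw [Function.comp_apply] at this ⊢
      rw [show (P.symm : (Fin n → ℝ) →ₗ[ℝ] _) (a t) = P.symm (a t) from rfl, hPsa t]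
      refine sub_mem (le_sup_left (α := Submodule ℝ (Fin n → ℝ)) (ha_S t)) ?_
      exact le_sup_right (α := Submodule ℝ (Fin n → ℝ))
        (Submodule.mem_map_of_mem (subset_span ⟨t, rfl⟩))
  rw [rank_eq_finrank_span_cols, rank_eq_finrank_span_cols, rank_eq_finrank_span_cols,
    Matrix.col, Matrix.col, Matrix.col, ← hC, ← hS, ← hD]
  have e1 := LinearEquiv.finrank_map_eq P.symm C
  have e2 := LinearEquiv.finrank_map_eq P.symm D
  rw [← e1, ← e2]
  exact le_trans (Submodule.finrank_mono key)
    (Submodule.finrank_add_le_finrank_add_finrank _ _)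
end

section
/- Let P be an n×n permutation matrix with permutation π_P having non-fixed-point count H(π_P) and cycle count C(π_P) (cycles of length ≥ 2). Then for any vectors a_1, ..., a_k ∈ ℝ^n, rank([P a_1 − a_1, ..., P a_k − a_k]) ≤ H(π_P) − C(π_P). -/
open Matrix

/-- Functions admitting "dual points" are linearly independent. -/
lemma li_of_points {ι : Type*} {n : ℕ} (v : ι → Fin n → ℝ) (pt : ι → Fin n)
    (h1 : ∀ i, v i (pt i) = 1) (h0 : ∀ i j, i ≠ j → v i (pt j) = 0) :
    LinearIndependent ℝ v := by
  rw [linearIndependent_iff']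
  intro s g hsum j hj
  have h := congrFun hsum (pt j)
  rw [Finset.sum_apply] at h
  simp only [Pi.smul_apply, smul_eq_mul, Pi.zero_apply] at h
  rw [Finset.sum_eq_single j (fun i _ hij => by rw [h0 i j hij, mul_zero])
      (fun h' => absurd hj h')] at h
  rwa [h1 j, mul_one] at h

/-- The support of a cycle factor of `σ` is invariant under `σ`. -/
lemma mem_support_cf_iff {n : ℕ} {σ c : Equiv.Perm (Fin n)}
    (hc : c ∈ σ.cycleFactorsFinset) {j : Fin n} :
    σ j ∈ c.support ↔ j ∈ c.support := by
  have hcσ : ∀ a ∈ c.support, c a = σ a :=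
    (Equiv.Perm.mem_cycleFactorsFinset_iff.mp hc).2
  have himg : c.support.image σ = c.support := by
    apply Finset.eq_of_subset_of_card_le
    · intro x hx
      obtain ⟨b, hb, rfl⟩ := Finset.mem_image.mp hx
      rw [← hcσ b hb]
      exact Equiv.Perm.apply_mem_support.mpr hb
    · rw [Finset.card_image_of_injective _ σ.injective]
  constructor
  · intro h
    rw [← himg] at h
    obtain ⟨b, hb, hbe⟩ := Finset.mem_image.mp h
    rwa [← σ.injective hbe]
  · intro h
    rw [← hcσ j h]
    exact Equiv.Perm.apply_mem_support.mpr h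

/-- For a permutation matrix `P` (with permutation `π_P`) and any vectors
`a_1, ..., a_k ∈ ℝ^n`, `rank [P a_1 − a_1, ..., P a_k − a_k] ≤ H(π_P) − C(π_P)`. -/
theorem rank_perm_diff_le {n k : ℕ} (σ : Equiv.Perm (Fin n)) (a : Fin k → (Fin n → ℝ)) :
    (Matrix.of fun i j => a j (σ i) - a j i : Matrix (Fin n) (Fin k) ℝ).rank ≤
      hammingWeight σ - cycleNumber σ := by
  classical
  set M2 : Matrix (Fin n) (Fin n) ℝ :=
    Matrix.of (fun i j => (if σ i = j then (1:ℝ) else 0) - (if i = j then 1 else 0)) with hM2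
  set A : Matrix (Fin n) (Fin k) ℝ := Matrix.of (fun l j => a j l) with hA
  have hfact : (Matrix.of fun i j => a j (σ i) - a j i : Matrix (Fin n) (Fin k) ℝ) = M2 * A := by
    ext i j
    simp [hM2, hA, Matrix.mul_apply, sub_mul, Finset.sum_sub_distrib, ite_mul]
  have hrank1 : (Matrix.of fun i j => a j (σ i) - a j i : Matrix (Fin n) (Fin k) ℝ).rank
      ≤ M2.rank := by
    rw [hfact]; exact Matrix.rank_mul_le_left M2 A
  -- compute the action of M2
  have hmv : ∀ x : Fin n → ℝ, M2.mulVecLin x = fun j => x (σ j) - x j := by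
    intro x; funext j
    simp [hM2, Matrix.mulVecLin, Matrix.mulVec, dotProduct, sub_mul,
      Finset.sum_sub_distrib, ite_mul]
  -- index type for kernel vectors
  set F := {i : Fin n // σ i = i}
  set Cyc := {c : Equiv.Perm (Fin n) // c ∈ σ.cycleFactorsFinset}
  -- kernel vectors
  set v : F ⊕ Cyc → (Fin n → ℝ) := fun idx =>
    Sum.elim (fun i : F => fun j => if j = (i : Fin n) then (1:ℝ) else 0)
      (fun c : Cyc => fun j => if j ∈ (c : Equiv.Perm (Fin n)).support then (1:ℝ) else 0) idx
    with hv
  have hsupp_ne : ∀ c : Cyc, (c : Equiv.Perm (Fin n)).support.Nonempty := by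
    intro c
    rw [Finset.nonempty_iff_ne_empty, Ne, Equiv.Perm.support_eq_empty_iff]
    exact (Equiv.Perm.mem_cycleFactorsFinset_iff.mp c.2).1.ne_one
  set pt : F ⊕ Cyc → Fin n := fun idx =>
    Sum.elim (fun i : F => (i : Fin n)) (fun c : Cyc => (hsupp_ne c).choose) idx with hpt
  have hptc : ∀ c : Cyc, pt (Sum.inr c) ∈ (c : Equiv.Perm (Fin n)).support :=
    fun c => (hsupp_ne c).choose_spec
  have hfix_not : ∀ (i : F) (c : Cyc), (i : Fin n) ∉ (c : Equiv.Perm (Fin n)).support := by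
    intro i c hmem
    have := Equiv.Perm.mem_cycleFactorsFinset_support_le c.2 hmem
    rw [Equiv.Perm.mem_support] at this
    exact this i.2
  -- the vectors lie in the kernel
  have hker : ∀ idx, v idx ∈ LinearMap.ker M2.mulVecLin := by
    intro idx
    rw [LinearMap.mem_ker, hmv]
    funext j
    cases idx with
    | inl i =>
      have : σ j = (i : Fin n) ↔ j = (i : Fin n) := by
        constructor
        · intro h; have := σ.injective (h.trans i.2.symm); exact this
        · rintro rfl; exact i.2
      simp only [hv, Sum.elim_inl, Pi.zero_apply]
      rw [if_congr this rfl rfl, sub_self]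
    | inr c =>
      simp only [hv, Sum.elim_inr, Pi.zero_apply]
      rw [if_congr (mem_support_cf_iff c.2) rfl rfl, sub_self]
  -- linear independence
  have hli : LinearIndependent ℝ v := by
    apply li_of_points v pt
    · rintro (i | c)
      · exact if_pos rfl
      · exact if_pos (hptc c)
    · rintro (i | c) (i' | c') hne
      · exact if_neg (fun h => hne (congrArg Sum.inl (Subtype.ext h).symm))
      · refine if_neg (fun h => hfix_not i c' ?_)
        rw [← h]; exact hptc c'
      · exact if_neg (hfix_not i' c)
      · have hcc : (c : Equiv.Perm (Fin n)) ≠ (c' : Equiv.Perm (Fin n)) := fun h =>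
          hne (by rw [Subtype.ext h])
        have hdisj : Disjoint (c : Equiv.Perm (Fin n)).support
            (c' : Equiv.Perm (Fin n)).support := by
          rw [← Equiv.Perm.disjoint_iff_disjoint_support]
          exact σ.cycleFactorsFinset_pairwise_disjoint c.2 c'.2 hcc
        exact if_neg (Finset.disjoint_right.mp hdisj (hptc c'))
  -- kernel dimension bound
  have hkerdim : Fintype.card F + Fintype.card Cyc ≤
      Module.finrank ℝ (LinearMap.ker M2.mulVecLin) := by
    have hli' : LinearIndependent ℝ
        (fun idx => (⟨v idx, hker idx⟩ : LinearMap.ker M2.mulVecLin)) := by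
      apply LinearIndependent.of_comp (LinearMap.ker M2.mulVecLin).subtype
      exact hli
    have := hli'.fintype_card_le_finrank
    simpa [Fintype.card_sum] using this
  -- rank-nullity
  have hrn : M2.rank + Module.finrank ℝ (LinearMap.ker M2.mulVecLin) = n := by
    have := LinearMap.finrank_range_add_finrank_ker M2.mulVecLin
    rwa [Module.finrank_fintype_fun_eq_card, Fintype.card_fin] at this
  -- cardinalities
  have hF : Fintype.card F + hammingWeight σ = n := by
    have : Fintype.card F = (Finset.univ.filter (fun i : Fin n => σ i = i)).card := by
      rw [Fintype.card_subtype]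
    rw [this, hammingWeight]
    have hsupp : σ.support = Finset.univ.filter (fun i : Fin n => ¬ σ i = i) := by
      ext i; simp [Equiv.Perm.mem_support]
    rw [hsupp, Finset.card_filter_add_card_filter_not]
    simp
  have hC : Fintype.card Cyc = cycleNumber σ := by
    have h1 : Fintype.card Cyc = σ.cycleFactorsFinset.card :=
      Fintype.card_of_subtype σ.cycleFactorsFinset (fun _ => Iff.rfl)
    rw [h1, cycleNumber, Equiv.Perm.cycleType, Multiset.card_map]
    rfl
  rw [hC] at hkerdim
  omega
end

section
/- For matrices A ∈ ℝ^{n×m_A}, B ∈ ℝ^{n×m_B} and any n×n permutation matrix P, one has −Z/N ≤ (‖[A, P B]‖_* − ‖[A, B]‖_*)/‖[A, B]‖_* ≤ Z/N, where N = max{‖A‖_*, ‖B‖_*}, Z = min{‖A‖_*, ‖B‖_*}, and ‖·‖_* denotes the nuclear norm. -/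
open Matrix

/-- The nuclear norm of a real matrix: the sum of its singular values, i.e. the sum of the
square roots of the eigenvalues of `Aᵀ A`. -/
noncomputable def nuclearNorm {m n : Type*} [Fintype m] [Fintype n] [DecidableEq n]
    (A : Matrix m n ℝ) : ℝ :=
  ∑ i, Real.sqrt ((Matrix.isHermitian_conjTranspose_mul_self A).eigenvalues i)

set_option linter.unusedSectionVars false

section aux0

variable {m n : Type*} [Fintype m] [Fintype n]

lemma dot_aux (W : Matrix m n ℝ) (a : n → ℝ) (b : m → ℝ) :
    a ⬝ᵥ (Wᵀ *ᵥ b) = (W *ᵥ a) ⬝ᵥ b := by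
  rw [dotProduct_mulVec, vecMul_transpose]

lemma dot_self_aux (W : Matrix m n ℝ) (v : n → ℝ) :
    (W *ᵥ v) ⬝ᵥ (W *ᵥ v) = v ⬝ᵥ ((Wᵀ * W) *ᵥ v) := by
  rw [← mulVec_mulVec, dot_aux]

lemma dot_aux' (W : Matrix m n ℝ) (a : m → ℝ) (b : n → ℝ) :
    a ⬝ᵥ (W *ᵥ b) = (Wᵀ *ᵥ a) ⬝ᵥ b := by
  simpa using dot_aux Wᵀ a b

end aux0

section aux

variable {m n : Type*} [Fintype m] [Fintype n] [DecidableEq n]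

-- trace as sum over an orthonormal eigenbasis
lemma trace_eq_sum_eigen {H : Matrix n n ℝ} (hH : H.IsHermitian) (M : Matrix n n ℝ) :
    trace M = ∑ j, (⇑(hH.eigenvectorBasis j)) ⬝ᵥ (M *ᵥ ⇑(hH.eigenvectorBasis j)) := by
  set U : Matrix n n ℝ := (hH.eigenvectorUnitary : Matrix n n ℝ) with hUdef
  have hst : star U = Uᵀ := by
    rw [Matrix.star_eq_conjTranspose, conjTranspose_eq_transpose_of_trivial]
  have h1 : U * Uᵀ = 1 := by
    rw [← hst]; exact mem_unitaryGroup_iff.mp hH.eigenvectorUnitary.2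
  have key : ∀ a b, (∑ j, (hH.eigenvectorBasis j) a * (hH.eigenvectorBasis j) b)
      = (1 : Matrix n n ℝ) a b := by
    intro a b
    rw [← h1]
    simp [mul_apply, hUdef, Matrix.IsHermitian.eigenvectorUnitary_apply]
  symm
  calc ∑ j, (⇑(hH.eigenvectorBasis j)) ⬝ᵥ (M *ᵥ ⇑(hH.eigenvectorBasis j))
      = ∑ j, ∑ a, ∑ b, (hH.eigenvectorBasis j) a * (M a b * (hH.eigenvectorBasis j) b) := by
        simp [dotProduct, mulVec, Finset.mul_sum]
    _ = ∑ a, ∑ b, (∑ j, (hH.eigenvectorBasis j) a * (hH.eigenvectorBasis j) b) * M a b := by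
        rw [Finset.sum_comm]
        refine Finset.sum_congr rfl fun a _ => ?_
        rw [Finset.sum_comm]
        refine Finset.sum_congr rfl fun b _ => ?_
        rw [Finset.sum_mul]
        exact Finset.sum_congr rfl fun j _ => by ring
    _ = ∑ a, ∑ b, (1 : Matrix n n ℝ) a b * M a b := by simp_rw [key]
    _ = trace M := by
        simp [one_apply, trace, diag, ite_mul, Finset.sum_ite_eq]

end aux


section key

variable {m n : Type*} [Fintype m] [Fintype n] [DecidableEq n]

lemma eigenbasis_dot_self {H : Matrix n n ℝ} (hH : H.IsHermitian) (j : n) :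
    (⇑(hH.eigenvectorBasis j)) ⬝ᵥ (⇑(hH.eigenvectorBasis j)) = 1 := by
  set U : Matrix n n ℝ := (hH.eigenvectorUnitary : Matrix n n ℝ) with hUdef
  have h1 : Uᵀ * U = 1 := by
    rw [show Uᵀ = star U by
      rw [Matrix.star_eq_conjTranspose, conjTranspose_eq_transpose_of_trivial]]
    exact mem_unitaryGroup_iff'.mp hH.eigenvectorUnitary.2
  have := congrFun (congrFun h1 j) j
  simpa [mul_apply, hUdef, Matrix.IsHermitian.eigenvectorUnitary_apply, dotProduct,
    one_apply] using this

lemma eigen_dot_X (X : Matrix m n ℝ) (j : n) :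
    (X *ᵥ ⇑((isHermitian_conjTranspose_mul_self X).eigenvectorBasis j)) ⬝ᵥ
      (X *ᵥ ⇑((isHermitian_conjTranspose_mul_self X).eigenvectorBasis j)) =
    (isHermitian_conjTranspose_mul_self X).eigenvalues j := by
  set hH := isHermitian_conjTranspose_mul_self X
  set u := ⇑(hH.eigenvectorBasis j) with hu
  have h1 : (X *ᵥ u) ⬝ᵥ (X *ᵥ u) = u ⬝ᵥ ((Xᵀ * X) *ᵥ u) := dot_self_aux X u
  rw [h1, show Xᵀ = Xᴴ from (conjTranspose_eq_transpose_of_trivial X).symm,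
    hH.mulVec_eigenvectorBasis j]
  rw [dotProduct_smul, smul_eq_mul, eigenbasis_dot_self hH j, mul_one]

lemma trace_le_nuclearNorm (X W : Matrix m n ℝ)
    (hW : ∀ v : n → ℝ, (W *ᵥ v) ⬝ᵥ (W *ᵥ v) ≤ v ⬝ᵥ v) :
    trace (Wᵀ * X) ≤ nuclearNorm X := by
  set hH := isHermitian_conjTranspose_mul_self X
  rw [trace_eq_sum_eigen hH (Wᵀ * X)]
  unfold nuclearNorm
  refine Finset.sum_le_sum fun j _ => ?_
  set u := ⇑(hH.eigenvectorBasis j) with hu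
  have h1 : u ⬝ᵥ ((Wᵀ * X) *ᵥ u) = (W *ᵥ u) ⬝ᵥ (X *ᵥ u) := by
    rw [← mulVec_mulVec, dot_aux]
  rw [h1]
  have cs : (W *ᵥ u) ⬝ᵥ (X *ᵥ u) ≤
      Real.sqrt ((W *ᵥ u) ⬝ᵥ (W *ᵥ u)) * Real.sqrt ((X *ᵥ u) ⬝ᵥ (X *ᵥ u)) := by
    have := Real.sum_mul_le_sqrt_mul_sqrt Finset.univ (W *ᵥ u) (X *ᵥ u)
    simpa [dotProduct, pow_two] using this
  have h2 : Real.sqrt ((W *ᵥ u) ⬝ᵥ (W *ᵥ u)) ≤ 1 := by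
    have := Real.sqrt_le_sqrt (hW u)
    rwa [eigenbasis_dot_self hH j, Real.sqrt_one] at this
  have h3 : (X *ᵥ u) ⬝ᵥ (X *ᵥ u) = hH.eigenvalues j := eigen_dot_X X j
  calc (W *ᵥ u) ⬝ᵥ (X *ᵥ u)
      ≤ Real.sqrt ((W *ᵥ u) ⬝ᵥ (W *ᵥ u)) * Real.sqrt ((X *ᵥ u) ⬝ᵥ (X *ᵥ u)) := cs
    _ ≤ 1 * Real.sqrt (hH.eigenvalues j) := by
        rw [h3]; exact mul_le_mul_of_nonneg_right h2 (Real.sqrt_nonneg _)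
    _ = Real.sqrt (hH.eigenvalues j) := one_mul _

end key

section exists_dual

variable {m n : Type*} [Fintype m] [Fintype n] [DecidableEq n]

lemma exists_dual_matrix (X : Matrix m n ℝ) : ∃ W : Matrix m n ℝ,
    (∀ v : n → ℝ, (W *ᵥ v) ⬝ᵥ (W *ᵥ v) ≤ v ⬝ᵥ v) ∧ trace (Wᵀ * X) = nuclearNorm X := by
  set hH := isHermitian_conjTranspose_mul_self X with hHdef
  set lam := hH.eigenvalues with hlam
  have lam_nn : ∀ i, 0 ≤ lam i := fun i =>
    (posSemidef_conjTranspose_mul_self X).eigenvalues_nonneg i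
  set U : Matrix n n ℝ := (hH.eigenvectorUnitary : Matrix n n ℝ) with hUdef
  have hst : star U = Uᵀ := by
    rw [Matrix.star_eq_conjTranspose, conjTranspose_eq_transpose_of_trivial]
  have hUUt : U * Uᵀ = 1 := by
    rw [← hst]; exact mem_unitaryGroup_iff.mp hH.eigenvectorUnitary.2
  have hdiag : Uᵀ * (Xᴴ * X) * U = diagonal lam := by
    have h := hH.conjStarAlgAut_star_eigenvectorUnitary
    rw [Unitary.conjStarAlgAut_star_apply] at h
    rw [hst] at h
    rw [h]
    congr 1
  set g : n → ℝ := fun i => if lam i = 0 then 0 else (Real.sqrt (lam i))⁻¹ with hg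
  have hglam : ∀ i, g i * lam i * g i ≤ 1 := by
    intro i
    by_cases h : lam i = 0
    · simp [hg, h]
    · have hpos : 0 < lam i := lt_of_le_of_ne (lam_nn i) (Ne.symm h)
      have hs : Real.sqrt (lam i) * Real.sqrt (lam i) = lam i :=
        Real.mul_self_sqrt (lam_nn i)
      have hsne : Real.sqrt (lam i) ≠ 0 := ne_of_gt (Real.sqrt_pos.mpr hpos)
      have : g i * lam i * g i = 1 := by
        simp only [hg, if_neg h]
        field_simp
        exact (Real.sq_sqrt (lam_nn i)).symm
      exact le_of_eq this
  have hglam2 : ∀ i, lam i * g i = Real.sqrt (lam i) := by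
    intro i
    by_cases h : lam i = 0
    · simp [hg, h]
    · have hs : Real.sqrt (lam i) * Real.sqrt (lam i) = lam i :=
        Real.mul_self_sqrt (lam_nn i)
      have hsne : Real.sqrt (lam i) ≠ 0 :=
        ne_of_gt (Real.sqrt_pos.mpr (lt_of_le_of_ne (lam_nn i) (Ne.symm h)))
      simp only [hg, if_neg h]
      field_simp
      exact (Real.sq_sqrt (lam_nn i)).symm
  set S : Matrix n n ℝ := U * diagonal g * Uᵀ with hS
  have hSym : Sᵀ = S := by
    rw [hS]
    simp [Matrix.transpose_mul, Matrix.diagonal_transpose, Matrix.mul_assoc]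
  refine ⟨X * S, ?_, ?_⟩
  · -- contraction
    intro v
    have hWtW : (X * S)ᵀ * (X * S) =
        U * diagonal (fun i => g i * lam i * g i) * Uᵀ := by
      rw [Matrix.transpose_mul, hSym]
      calc S * Xᵀ * (X * S)
          = U * diagonal g * (Uᵀ * (Xᴴ * X) * U) * diagonal g * Uᵀ := by
            rw [hS, show Xᵀ = Xᴴ from (conjTranspose_eq_transpose_of_trivial X).symm]
            simp only [Matrix.mul_assoc]
        _ = U * diagonal g * diagonal lam * diagonal g * Uᵀ := by rw [hdiag]
        _ = U * diagonal (fun i => g i * lam i * g i) * Uᵀ := by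
            rw [show U * diagonal g * diagonal lam * diagonal g =
              U * (diagonal g * diagonal lam * diagonal g) by simp only [Matrix.mul_assoc],
              diagonal_mul_diagonal, diagonal_mul_diagonal]
    rw [dot_self_aux, hWtW]
    set w := Uᵀ *ᵥ v with hw
    have hform : v ⬝ᵥ ((U * diagonal (fun i => g i * lam i * g i) * Uᵀ) *ᵥ v) =
        w ⬝ᵥ (diagonal (fun i => g i * lam i * g i) *ᵥ w) := by
      rw [← Matrix.mulVec_mulVec, ← Matrix.mulVec_mulVec, dot_aux' U]
    have hvv : w ⬝ᵥ w = v ⬝ᵥ v := by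
      rw [hw, ← dot_aux' U, Matrix.mulVec_mulVec, hUUt, Matrix.one_mulVec]
    rw [hform, ← hvv]
    simp only [dotProduct, mulVec_diagonal]
    refine Finset.sum_le_sum fun i _ => ?_
    have h1 : (g i * lam i * g i) * (w i * w i) ≤ 1 * (w i * w i) :=
      mul_le_mul_of_nonneg_right (hglam i) (mul_self_nonneg _)
    nlinarith [h1]
  · -- trace equality
    have htr : ((X * S)ᵀ * X) = S * (Xᴴ * X) := by
      rw [Matrix.transpose_mul, hSym,
        show Xᵀ = Xᴴ from (conjTranspose_eq_transpose_of_trivial X).symm, Matrix.mul_assoc]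
    have hNN : nuclearNorm X = ∑ i, Real.sqrt (lam i) := rfl
    rw [htr, hNN]
    calc trace (S * (Xᴴ * X))
        = trace ((U * diagonal g) * (Uᵀ * (Xᴴ * X))) := by
          rw [hS]; simp only [Matrix.mul_assoc]
      _ = trace ((Uᵀ * (Xᴴ * X)) * (U * diagonal g)) := Matrix.trace_mul_comm _ _
      _ = trace ((Uᵀ * (Xᴴ * X) * U) * diagonal g) := by simp only [Matrix.mul_assoc]
      _ = trace (diagonal lam * diagonal g) := by rw [hdiag]
      _ = ∑ i, lam i * g i := by rw [diagonal_mul_diagonal, Matrix.trace_diagonal]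
      _ = ∑ i, Real.sqrt (lam i) := Finset.sum_congr rfl fun i _ => hglam2 i

end exists_dual

section derived

variable {m p q : Type*} [Fintype m] [Fintype p] [Fintype q] [DecidableEq p] [DecidableEq q]

lemma nuclearNorm_nonneg (X : Matrix m p ℝ) : 0 ≤ nuclearNorm X :=
  Finset.sum_nonneg fun _ _ => Real.sqrt_nonneg _

lemma nuclearNorm_pos (X : Matrix m p ℝ) (hX : X ≠ 0) : 0 < nuclearNorm X := by
  set hH := isHermitian_conjTranspose_mul_self X with hHdef
  set lam := hH.eigenvalues with hlam
  have lam_nn : ∀ i, 0 ≤ lam i := fun i =>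
    (posSemidef_conjTranspose_mul_self X).eigenvalues_nonneg i
  -- trace of Xᴴ X equals sum of eigenvalues
  have htr : trace (Xᴴ * X) = ∑ i, lam i := by
    have hs := hH.spectral_theorem
    rw [hs, Unitary.conjStarAlgAut_apply, Matrix.trace_mul_cycle]
    have hone : star (hH.eigenvectorUnitary : Matrix p p ℝ) *
        (hH.eigenvectorUnitary : Matrix p p ℝ) = 1 :=
      mem_unitaryGroup_iff'.mp hH.eigenvectorUnitary.2
    rw [hone, Matrix.one_mul, Matrix.trace_diagonal]
    simp
    rfl
  -- trace is positive
  have hpos : 0 < trace (Xᴴ * X) := by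
    have hent : ∃ i j, X i j ≠ 0 := by
      by_contra h
      push_neg at h
      exact hX (by ext i j; exact h i j)
    obtain ⟨i0, j0, h0⟩ := hent
    have : trace (Xᴴ * X) = ∑ j, ∑ i, X i j * X i j := by
      simp [trace, diag, mul_apply, conjTranspose_apply]
    rw [this]
    have hterm : ∀ j ∈ Finset.univ, (0:ℝ) ≤ ∑ i, X i j * X i j := fun j _ =>
      Finset.sum_nonneg fun i _ => mul_self_nonneg _
    have hj0 : 0 < ∑ i, X i j0 * X i j0 := by
      have : ∀ i ∈ Finset.univ, (0:ℝ) ≤ X i j0 * X i j0 := fun i _ => mul_self_nonneg _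
      have h1 : 0 < X i0 j0 * X i0 j0 := mul_self_pos.mpr h0
      exact Finset.sum_pos' this ⟨i0, Finset.mem_univ i0, h1⟩
    exact Finset.sum_pos' hterm ⟨j0, Finset.mem_univ j0, hj0⟩
  rw [htr] at hpos
  obtain ⟨i, _, hi⟩ := Finset.exists_lt_of_sum_lt (by simpa using hpos :
    ∑ _i : p, (0:ℝ) < ∑ i, lam i)
  have : 0 < Real.sqrt (lam i) := Real.sqrt_pos.mpr hi
  have hle : Real.sqrt (lam i) ≤ nuclearNorm X :=
    Finset.single_le_sum (fun j _ => Real.sqrt_nonneg _) (Finset.mem_univ i)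
  linarith

lemma eigenvalues_congr {M N : Matrix p p ℝ} (h : M = N) (hM : M.IsHermitian)
    (hN : N.IsHermitian) : hM.eigenvalues = hN.eigenvalues := by
  subst h; rfl

lemma nuclearNorm_congr (X Y : Matrix m p ℝ) (h : Xᴴ * X = Yᴴ * Y) :
    nuclearNorm X = nuclearNorm Y := by
  unfold nuclearNorm
  refine Finset.sum_congr rfl fun i _ => ?_
  rw [eigenvalues_congr h (isHermitian_conjTranspose_mul_self X) (isHermitian_conjTranspose_mul_self Y)]

lemma nuclearNorm_submatrix_perm (B : Matrix m p ℝ) (σ : Equiv.Perm m) :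
    nuclearNorm (B.submatrix σ id) = nuclearNorm B := by
  apply nuclearNorm_congr
  ext i j
  simp only [mul_apply, conjTranspose_apply, submatrix_apply, id_eq, star_trivial]
  exact Fintype.sum_equiv σ _ _ fun k => rfl

end derived

section blocks

variable {m p q : Type*} [Fintype m] [Fintype p] [Fintype q] [DecidableEq p] [DecidableEq q]

lemma trace_fromBlocks' (A : Matrix p p ℝ) (B : Matrix p q ℝ) (C : Matrix q p ℝ)
    (D : Matrix q q ℝ) : trace (fromBlocks A B C D) = trace A + trace D := by
  simp [trace, Fintype.sum_sum_type, fromBlocks]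

lemma trace_fromColumns_split (W₁ C : Matrix m p ℝ) (W₂ D : Matrix m q ℝ) :
    trace ((fromCols W₁ W₂)ᵀ * fromCols C D) = trace (W₁ᵀ * C) + trace (W₂ᵀ * D) := by
  rw [transpose_fromCols, fromRows_mul_fromCols, trace_fromBlocks']

lemma dot_sum_split (v : p ⊕ q → ℝ) :
    v ⬝ᵥ v = (v ∘ Sum.inl) ⬝ᵥ (v ∘ Sum.inl) + (v ∘ Sum.inr) ⬝ᵥ (v ∘ Sum.inr) := by
  simp [dotProduct, Fintype.sum_sum_type, Function.comp]

lemma nuclearNorm_fromColumns_le (C : Matrix m p ℝ) (D : Matrix m q ℝ) :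
    nuclearNorm (fromCols C D) ≤ nuclearNorm C + nuclearNorm D := by
  obtain ⟨W, hW, hWt⟩ := exists_dual_matrix (fromCols C D)
  have hWsplit : fromCols (W.submatrix id Sum.inl) (W.submatrix id Sum.inr) = W := by
    ext i j; cases j <;> simp [fromCols]
  rw [← hWt, ← hWsplit, trace_fromColumns_split]
  have h1 : trace ((W.submatrix id Sum.inl)ᵀ * C) ≤ nuclearNorm C := by
    apply trace_le_nuclearNorm
    intro v
    have h := hW (Sum.elim v 0)
    rw [← hWsplit, fromCols_mulVec_sumElim] at h
    simpa [dotProduct] using h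
  have h2 : trace ((W.submatrix id Sum.inr)ᵀ * D) ≤ nuclearNorm D := by
    apply trace_le_nuclearNorm
    intro v
    have h := hW (Sum.elim 0 v)
    rw [← hWsplit, fromCols_mulVec_sumElim] at h
    simpa [dotProduct] using h
  linarith

lemma left_le_nuclearNorm_fromColumns (C : Matrix m p ℝ) (D : Matrix m q ℝ) :
    nuclearNorm C ≤ nuclearNorm (fromCols C D) := by
  obtain ⟨W₁, hW₁, ht⟩ := exists_dual_matrix C
  have key : trace ((fromCols W₁ (0 : Matrix m q ℝ))ᵀ * fromCols C D) = nuclearNorm C := by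
    rw [trace_fromColumns_split, ht]
    simp
  rw [← key]
  apply trace_le_nuclearNorm
  intro v
  have hv : v = Sum.elim (v ∘ Sum.inl) (v ∘ Sum.inr) := by
    funext j; cases j <;> rfl
  rw [hv, fromCols_mulVec_sumElim]
  simp only [Matrix.zero_mulVec, add_zero]
  calc (W₁ *ᵥ (v ∘ Sum.inl)) ⬝ᵥ (W₁ *ᵥ (v ∘ Sum.inl)) ≤ (v ∘ Sum.inl) ⬝ᵥ (v ∘ Sum.inl) :=
        hW₁ _
    _ ≤ Sum.elim (v ∘ Sum.inl) (v ∘ Sum.inr) ⬝ᵥ Sum.elim (v ∘ Sum.inl) (v ∘ Sum.inr) := by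
        rw [dot_sum_split]
        simp only [Sum.elim_comp_inl, Sum.elim_comp_inr]
        have : (0:ℝ) ≤ (v ∘ Sum.inr) ⬝ᵥ (v ∘ Sum.inr) :=
          Finset.sum_nonneg fun i _ => mul_self_nonneg _
        linarith

lemma right_le_nuclearNorm_fromColumns (C : Matrix m p ℝ) (D : Matrix m q ℝ) :
    nuclearNorm D ≤ nuclearNorm (fromCols C D) := by
  obtain ⟨W₂, hW₂, ht⟩ := exists_dual_matrix D
  have key : trace ((fromCols (0 : Matrix m p ℝ) W₂)ᵀ * fromCols C D) = nuclearNorm D := by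
    rw [trace_fromColumns_split, ht]
    simp
  rw [← key]
  apply trace_le_nuclearNorm
  intro v
  have hv : v = Sum.elim (v ∘ Sum.inl) (v ∘ Sum.inr) := by
    funext j; cases j <;> rfl
  rw [hv, fromCols_mulVec_sumElim]
  simp only [Matrix.zero_mulVec, zero_add]
  calc (W₂ *ᵥ (v ∘ Sum.inr)) ⬝ᵥ (W₂ *ᵥ (v ∘ Sum.inr)) ≤ (v ∘ Sum.inr) ⬝ᵥ (v ∘ Sum.inr) :=
        hW₂ _
    _ ≤ Sum.elim (v ∘ Sum.inl) (v ∘ Sum.inr) ⬝ᵥ Sum.elim (v ∘ Sum.inl) (v ∘ Sum.inr) := by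
        rw [dot_sum_split]
        simp only [Sum.elim_comp_inl, Sum.elim_comp_inr]
        have : (0:ℝ) ≤ (v ∘ Sum.inl) ⬝ᵥ (v ∘ Sum.inl) :=
          Finset.sum_nonneg fun i _ => mul_self_nonneg _
        linarith

end blocks

/-- For `A ∈ ℝ^{n×m_A}`, `B ∈ ℝ^{n×m_B}` and any permutation matrix `P`,
`−Z/N ≤ (‖[A,PB]‖_* − ‖[A,B]‖_*)/‖[A,B]‖_* ≤ Z/N` where `N = max{‖A‖_*, ‖B‖_*}`
and `Z = min{‖A‖_*, ‖B‖_*}`. -/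
theorem nuclearNorm_perm_relative_error_bound {n mA mB : ℕ}
    (A : Matrix (Fin n) (Fin mA) ℝ) (B : Matrix (Fin n) (Fin mB) ℝ)
    (σ : Equiv.Perm (Fin n)) (hAB : fromCols A B ≠ 0) :
    -(min (nuclearNorm A) (nuclearNorm B) / max (nuclearNorm A) (nuclearNorm B)) ≤
        (nuclearNorm (fromCols A (B.submatrix σ id)) - nuclearNorm (fromCols A B)) /
          nuclearNorm (fromCols A B) ∧
      (nuclearNorm (fromCols A (B.submatrix σ id)) - nuclearNorm (fromCols A B)) /
          nuclearNorm (fromCols A B) ≤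
        min (nuclearNorm A) (nuclearNorm B) / max (nuclearNorm A) (nuclearNorm B) := by
  set a := nuclearNorm A with ha
  set b := nuclearNorm B with hb
  set x := nuclearNorm (fromCols A (B.submatrix σ id)) with hx
  set y := nuclearNorm (fromCols A B) with hy
  have hb' : nuclearNorm (B.submatrix σ id) = b := nuclearNorm_submatrix_perm B σ
  have hya : a ≤ y := left_le_nuclearNorm_fromColumns A B
  have hyb : b ≤ y := right_le_nuclearNorm_fromColumns A B
  have hyab : y ≤ a + b := nuclearNorm_fromColumns_le A B
  have hxa : a ≤ x := left_le_nuclearNorm_fromColumns A (B.submatrix σ id)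
  have hxb : b ≤ x := hb' ▸ right_le_nuclearNorm_fromColumns A (B.submatrix σ id)
  have hxab : x ≤ a + b := by
    have := nuclearNorm_fromColumns_le A (B.submatrix σ id)
    rwa [hb'] at this
  have hy0 : 0 < y := nuclearNorm_pos _ hAB
  have ha0 : 0 ≤ a := nuclearNorm_nonneg A
  have hb0 : 0 ≤ b := nuclearNorm_nonneg B
  have hZ : 0 ≤ min a b := le_min ha0 hb0
  have hNy : max a b ≤ y := max_le hya hyb
  have hNx : max a b ≤ x := max_le hxa hxb
  have hN : 0 < max a b := by
    by_contra h
    push_neg at h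
    nlinarith [le_max_left a b, le_max_right a b]
  have hmm : min a b + max a b = a + b := min_add_max a b
  have hZN : min a b ≤ max a b := min_le_max
  constructor
  · rw [← neg_div, div_le_div_iff₀ hN hy0]
    nlinarith [mul_nonneg (sub_nonneg.2 hNx) hN.le,
      mul_nonneg (by nlinarith : (0:ℝ) ≤ min a b + max a b - y) (sub_nonneg.2 hZN),
      sq_nonneg (min a b)]
  · rw [div_le_div_iff₀ hy0 hN]
    nlinarith [mul_nonneg (sub_nonneg.2 hNy) (by nlinarith : (0:ℝ) ≤ min a b + max a b)]
end

section
/- Let u = (1, 2, ..., j, 0, ..., 0)^T ∈ ℝ^n and let P_* be the permutation matrix of the cycle (1 2 ... j). If j ≥ 2r, then the matrix [u, P_* u, P_*² u, ..., P_*^{2r−1} u] ∈ ℝ^{n×2r} has rank 2r. -/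
open Matrix

lemma sum_aux_two (m : ℕ) : ∑ i ∈ Finset.range m, ((i : ℝ) + 2) = m * (m + 3) / 2 := by
  induction m with
  | zero => simp
  | succ m ih => rw [Finset.sum_range_succ, ih]; push_cast; ring

/-- Let `u = (1, 2, ..., j, 0, ..., 0)ᵀ ∈ ℝⁿ` and let `P_*` be the permutation matrix of
the cycle that shifts the first `j` coordinates cyclically.  If `j ≥ 2r`, then the matrix
`[u, P_* u, P_*² u, ..., P_*^{2r−1} u] ∈ ℝ^{n×2r}` has rank `2r`. -/
theorem rank_cyclic_shift_columns {n j r : ℕ} (hjn : j ≤ n) (hj2r : 2 * r ≤ j)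
    (σ : Equiv.Perm (Fin n))
    (hσ : ∀ i : Fin n, ((σ i : ℕ) = if (i : ℕ) < j then ((i : ℕ) + 1) % j else (i : ℕ)))
    (u : Fin n → ℝ) (hu : ∀ i : Fin n, u i = if (i : ℕ) < j then (i : ℕ) + 1 else 0) :
    (Matrix.of fun (i : Fin n) (k : Fin (2 * r)) => u ((σ ^ (k : ℕ)) i)).rank = 2 * r := by
  have hpow : ∀ (k : ℕ) (i : Fin n),
      (((σ ^ k) i : Fin n) : ℕ) = if (i : ℕ) < j then ((i : ℕ) + k) % j else (i : ℕ) := by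
    intro k
    induction k with
    | zero =>
      intro i
      by_cases h : (i : ℕ) < j
      · simp [h, Nat.mod_eq_of_lt h]
      · simp [h]
    | succ k ih =>
      intro i
      rw [pow_succ, Equiv.Perm.mul_apply]
      have hs := hσ i
      by_cases h : (i : ℕ) < j
      · have hj0 : 0 < j := by omega
        rw [ih (σ i), hs]
        simp only [h, if_true, Nat.mod_lt _ hj0, if_pos (Nat.mod_lt _ hj0)]
        rw [Nat.mod_add_mod]
        congr 1
        omega
      · have hfix : σ i = i := Fin.ext (by rw [hs]; simp [h])
        rw [hfix, ih i]
        simp [h]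
  have hv : ∀ (k : ℕ) (i : Fin n),
      u ((σ ^ k) i) = if (i : ℕ) < j then ((((i : ℕ) + k) % j : ℕ) + 1 : ℝ) else 0 := by
    intro k i
    rw [hu, hpow]
    by_cases h : (i : ℕ) < j
    · have hj0 : 0 < j := by omega
      simp [h, Nat.mod_lt _ hj0]
    · simp [h]
  have li : LinearIndependent ℝ (fun (k : Fin (2 * r)) (i : Fin n) => u ((σ ^ (k : ℕ)) i)) := by
    rw [Fintype.linearIndependent_iff]
    intro c hc
    have key : ∀ m : ℕ, m < j →
        ∑ k : Fin (2 * r), c k * (((m + (k : ℕ)) % j : ℕ) + 1 : ℝ) = 0 := by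
      intro m hm
      have h0 := congrFun hc ⟨m, lt_of_lt_of_le hm hjn⟩
      simp only [Finset.sum_apply, Pi.smul_apply, smul_eq_mul, Pi.zero_apply] at h0
      rw [← h0]
      refine Finset.sum_congr rfl fun k _ => ?_
      rw [hv (k : ℕ) ⟨m, lt_of_lt_of_le hm hjn⟩]
      simp [hm]
    intro k0
    have hr : 0 < r := by have := k0.2; omega
    have hj2 : 2 ≤ j := by omega
    have h1r : (1:ℝ) ≤ r := by exact_mod_cast hr
    have h2r : 2 * (r:ℝ) ≤ j := by exact_mod_cast hj2r
    have h12r : 1 < 2 * r := by omega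
    set S : ℝ := ∑ k : Fin (2 * r), c k with hSdef
    have hrow : ∀ (t : ℕ) (h1 : 1 ≤ t) (h2 : t < 2 * r), S = j * c ⟨t, h2⟩ := by
      intro t h1 h2
      have hi1 : j - 1 - t < j := by omega
      have hi2 : j - 1 - t + 1 < j := by omega
      have E1 := key (j - 1 - t) hi1
      have E2 := key (j - 1 - t + 1) hi2
      have hsub : ∑ k : Fin (2 * r),
          (c k * (((j - 1 - t + 1 + (k:ℕ)) % j : ℕ) + 1 : ℝ)
            - c k * (((j - 1 - t + (k:ℕ)) % j : ℕ) + 1 : ℝ)) = 0 := by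
        rw [Finset.sum_sub_distrib, E1, E2]; ring
      have hterm : ∀ k : Fin (2 * r),
          c k * (((j - 1 - t + 1 + (k:ℕ)) % j : ℕ) + 1 : ℝ)
            - c k * (((j - 1 - t + (k:ℕ)) % j : ℕ) + 1 : ℝ)
          = c k - (if k = (⟨t, h2⟩ : Fin (2 * r)) then (j:ℝ) * c k else 0) := by
        intro k
        have hk2r : (k : ℕ) < 2 * r := k.2
        rcases lt_trichotomy (k : ℕ) t with hkt | hkt | hkt
        · have e1 : (j - 1 - t + 1 + (k:ℕ)) % j = j - 1 - t + 1 + (k:ℕ) :=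
            Nat.mod_eq_of_lt (by omega)
          have e2 : (j - 1 - t + (k:ℕ)) % j = j - 1 - t + (k:ℕ) :=
            Nat.mod_eq_of_lt (by omega)
          have hne : k ≠ (⟨t, h2⟩ : Fin (2 * r)) := Fin.ne_of_val_ne (show (k : ℕ) ≠ t by omega)
          rw [e1, e2, if_neg hne]
          have : ((j - 1 - t + 1 + (k:ℕ) : ℕ) : ℝ) = ((j - 1 - t + (k:ℕ) : ℕ) : ℝ) + 1 := by
            push_cast; ring
          rw [this]; ring
        · have e1 : j - 1 - t + 1 + (k:ℕ) = j := by omega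
          have e2 : (j - 1 - t + (k:ℕ)) % j = j - 1 := Nat.mod_eq_of_lt (by omega) |>.trans (by omega)
          have heq : k = (⟨t, h2⟩ : Fin (2 * r)) := Fin.ext hkt
          rw [e1, Nat.mod_self, e2, if_pos heq]
          rw [Nat.cast_sub (by omega : 1 ≤ j)]
          push_cast
          ring
        · obtain ⟨a, ha⟩ : ∃ a, (k:ℕ) = t + 1 + a := ⟨(k:ℕ) - t - 1, by omega⟩
          have e1 : j - 1 - t + 1 + (k:ℕ) = j + (a + 1) := by omega
          have e2 : j - 1 - t + (k:ℕ) = j + a := by omega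
          have hne : k ≠ (⟨t, h2⟩ : Fin (2 * r)) := Fin.ne_of_val_ne (show (k : ℕ) ≠ t by omega)
          rw [e1, e2, Nat.add_mod_left, Nat.add_mod_left,
            Nat.mod_eq_of_lt (by omega : a + 1 < j), Nat.mod_eq_of_lt (by omega : a < j),
            if_neg hne]
          push_cast; ring
      rw [Finset.sum_congr rfl (fun k _ => hterm k), Finset.sum_sub_distrib,
        Finset.sum_ite_eq' Finset.univ (⟨t, h2⟩ : Fin (2 * r)) (fun k => (j:ℝ) * c k)] at hsub
      simp only [Finset.mem_univ, if_true] at hsub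
      rw [← hSdef] at hsub
      linarith
    have hceq : ∀ (t : ℕ) (h1 : 1 ≤ t) (h2 : t < 2 * r),
        c ⟨t, h2⟩ = c ⟨1, h12r⟩ := by
      intro t h1 h2
      have e1 := hrow t h1 h2
      have e2 := hrow 1 le_rfl h12r
      have hj0 : (j:ℝ) ≠ 0 := by
        have : 0 < j := by omega
        exact_mod_cast this.ne'
      exact mul_left_cancel₀ hj0 (e1.symm.trans e2)
    set d : ℝ := c ⟨1, h12r⟩ with hddef
    -- convert sums to range sums
    set cc : ℕ → ℝ := fun m => if h : m < 2 * r then c ⟨m, h⟩ else 0 with hccdef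
    have hccon : ∀ k : Fin (2 * r), c k = cc (k : ℕ) := by
      intro k; simp [hccdef, k.2]
    have hm1 : 2 * r = (2 * r - 1) + 1 := by omega
    have hSr : S = cc 0 + (2 * r - 1 : ℕ) * d := by
      rw [hSdef]
      rw [Finset.sum_congr rfl (fun k _ => hccon k)]
      rw [Fin.sum_univ_eq_sum_range (fun m => cc m) (2 * r), hm1, Finset.sum_range_succ']
      have : ∀ i ∈ Finset.range (2 * r - 1), cc (i + 1) = d := by
        intro i hi
        simp only [Finset.mem_range] at hi
        rw [hccdef]
        simp only [dif_pos (show i + 1 < 2 * r by omega)]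
        exact hceq (i + 1) (by omega) (by omega)
      rw [Finset.sum_congr rfl this, Finset.sum_const, Finset.card_range]
      push_cast
      ring
    have E0 := key 0 (by omega)
    have E0' : cc 0 + d * ((2 * r - 1 : ℕ) * ((2 * r - 1 : ℕ) + 3) / 2) = 0 := by
      have h2 : ∑ k : Fin (2 * r), c k * (((k : ℕ)) + 1 : ℝ) = 0 := by
        rw [← E0]
        refine Finset.sum_congr rfl fun k _ => ?_
        rw [Nat.zero_add, Nat.mod_eq_of_lt (by omega : (k:ℕ) < j)]
      rw [Finset.sum_congr rfl (fun k _ => by rw [hccon k])] at h2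
      rw [Fin.sum_univ_eq_sum_range (fun m => cc m * ((m : ℝ) + 1)) (2 * r), hm1,
        Finset.sum_range_succ'] at h2
      have hco : ∀ i ∈ Finset.range (2 * r - 1),
          cc (i + 1) * (((i + 1 : ℕ) : ℝ) + 1) = d * ((i : ℝ) + 2) := by
        intro i hi
        simp only [Finset.mem_range] at hi
        have : cc (i + 1) = d := by
          rw [hccdef]
          simp only [dif_pos (show i + 1 < 2 * r by omega)]
          exact hceq (i + 1) (by omega) (by omega)
        rw [this]; push_cast; ring
      rw [Finset.sum_congr rfl hco, ← Finset.mul_sum, sum_aux_two] at h2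
      push_cast at h2
      linarith
    have hS1 := hrow 1 le_rfl h12r
    rw [← hddef] at hS1
    have hm : ((2 * r - 1 : ℕ) : ℝ) = 2 * r - 1 := by
      rw [Nat.cast_sub (by omega : 1 ≤ 2 * r)]; push_cast; ring
    rw [hm] at hSr E0'
    have hfac : d * ((j : ℝ) + 2 * r ^ 2 - r) = 0 := by
      linear_combination E0' + hSr - hS1
    have hd0 : d = 0 := by
      rcases mul_eq_zero.mp hfac with h | h
      · exact h
      · exfalso; nlinarith
    have hcc0 : cc 0 = 0 := by
      rw [hd0] at E0'; linarith [E0']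
    by_cases hk0 : (k0 : ℕ) = 0
    · have : k0 = (⟨0, by omega⟩ : Fin (2 * r)) := Fin.ext (by simpa using hk0)
      rw [this]
      have : cc 0 = c ⟨0, by omega⟩ := by
        rw [hccdef]; simp [show 0 < 2 * r by omega]
      rw [← this]; exact hcc0
    · have hk1 : 1 ≤ (k0 : ℕ) := by omega
      have : c k0 = c ⟨(k0 : ℕ), k0.2⟩ := by congr
      rw [this, hceq (k0 : ℕ) hk1 k0.2]
      exact hd0
  rw [Matrix.rank_eq_finrank_span_cols]
  have : (Matrix.of fun (i : Fin n) (k : Fin (2 * r)) => u ((σ ^ (k : ℕ)) i)).col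
      = fun (k : Fin (2 * r)) (i : Fin n) => u ((σ ^ (k : ℕ)) i) := rfl
  rw [this, finrank_span_eq_card li, Fintype.card_fin]
end

section
/- Let M = [A, B_1, ..., B_d] ∈ ℝ^{n×m} with rank(M) = r, rank(A) = r_A, rank(B_i) = r_{B_i}. Then for all permutation matrices P_1, ..., P_d ∈ 𝒫_n, rank([A, P_1 B_1, ..., P_d B_d]) ≤ min{n, m, r_A + Σ_i r_{B_i}, r + Σ_i (H(π_{P_i}) − C(π_{P_i}))}. -/
set_option maxHeartbeats 1000000

open Matrix

section Aux

open Submodule Module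

private lemma finrank_finsetSup_le {V : Type*} [AddCommGroup V] [Module ℝ V]
    [FiniteDimensional ℝ V] {ι : Type*} [DecidableEq ι] (s : Finset ι)
    (W : ι → Submodule ℝ V) :
    finrank ℝ (s.sup W : Submodule ℝ V) ≤ ∑ i ∈ s, finrank ℝ (W i) := by
  induction s using Finset.induction with
  | empty => simp
  | @insert a s ha ih =>
    rw [Finset.sup_insert, Finset.sum_insert ha]
    exact (Submodule.finrank_add_le_finrank_add_finrank _ _).trans (add_le_add_right ih _)

private lemma rank_le_finrank_of_cols {n : ℕ} {κ : Type*} [Fintype κ]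
    (N : Matrix (Fin n) κ ℝ) (W : Submodule ℝ (Fin n → ℝ)) (h : ∀ j, Nᵀ j ∈ W) :
    N.rank ≤ finrank ℝ W := by
  rw [Matrix.rank_eq_finrank_span_cols]
  exact Submodule.finrank_mono (span_le.mpr (Set.range_subset_iff.mpr h))

private lemma rank_rowperm {n k : ℕ} (σ : Equiv.Perm (Fin n)) (B : Matrix (Fin n) (Fin k) ℝ) :
    (B.submatrix σ id).rank = B.rank := by
  rw [Matrix.rank_eq_finrank_span_row, Matrix.rank_eq_finrank_span_row]
  have h : Set.range (B.submatrix (⇑σ) id).row = Set.range B.row := σ.surjective.range_comp B.row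
  rw [h]

/-- Key lemma: the difference matrix has rank at most `H(σ) - C(σ)`. -/
private lemma rank_perm_sub_le {n k : ℕ} (σ : Equiv.Perm (Fin n))
    (B : Matrix (Fin n) (Fin k) ℝ) :
    (Matrix.of fun i j => B (σ i) j - B i j).rank ≤ hammingWeight σ - cycleNumber σ := by
  classical
  set M : Matrix (Fin n) (Fin k) ℝ := Matrix.of fun i j => B (σ i) j - B i j with hMdef
  have hne : ∀ c ∈ σ.cycleFactorsFinset, c.support.Nonempty := fun c hc =>
    (Equiv.Perm.mem_cycleFactorsFinset_iff.mp hc).1.nonempty_support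
  have hsupp_le : ∀ c ∈ σ.cycleFactorsFinset, ∀ x ∈ c.support, x ∈ σ.support := by
    intro c hc x hx
    have h1 := (Equiv.Perm.mem_cycleFactorsFinset_iff.mp hc).2 x hx
    have h2 := Equiv.Perm.mem_support.mp hx
    exact Equiv.Perm.mem_support.mpr (h1 ▸ h2)
  set reps : Finset (Fin n) :=
    σ.cycleFactorsFinset.attach.image (fun c => c.1.support.min' (hne c.1 c.2)) with hreps
  have hreps_card : reps.card = cycleNumber σ := by
    rw [hreps, Finset.card_image_of_injOn, Finset.card_attach]
    · rw [cycleNumber, Equiv.Perm.cycleType_def, Multiset.card_map]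
      rfl
    · intro c _ c' _ hcc'
      have hcc2 : c.1.support.min' (hne c.1 c.2) = c'.1.support.min' (hne c'.1 c'.2) := hcc'
      have h1 : c.1.support.min' (hne c.1 c.2) ∈ c.1.support := Finset.min'_mem _ _
      have h2 : c.1.support.min' (hne c.1 c.2) ∈ c'.1.support := by
        rw [hcc2]; exact Finset.min'_mem _ _
      have := (Equiv.Perm.cycle_is_cycleOf h1 c.2).trans
        (Equiv.Perm.cycle_is_cycleOf h2 c'.2).symm
      exact Subtype.ext this
  have hreps_sub : reps ⊆ σ.support := by
    intro x hx
    obtain ⟨c, _, rfl⟩ := Finset.mem_image.mp hx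
    exact hsupp_le c.1 c.2 _ (Finset.min'_mem _ _)
  set s : Finset (Fin n) := σ.support \ reps with hs
  have hcard : s.card = hammingWeight σ - cycleNumber σ := by
    rw [hs, Finset.card_sdiff_of_subset hreps_sub, hreps_card]; rfl
  -- every row of M lies in the span of the rows indexed by s
  have hrow : ∀ i, M i ∈ Submodule.span ℝ (M '' ↑s) := by
    intro i
    by_cases hi : σ i = i
    · have : M i = 0 := funext fun j => by simp [hMdef, hi]
      rw [this]; exact zero_mem _
    · have hiS : i ∈ σ.support := Equiv.Perm.mem_support.mpr hi
      set c := σ.cycleOf i with hcdef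
      have hc : c ∈ σ.cycleFactorsFinset :=
        Equiv.Perm.cycleOf_mem_cycleFactorsFinset_iff.mpr hiS
      have hisup : i ∈ c.support :=
        Equiv.Perm.mem_support_cycleOf_iff.mpr ⟨Equiv.Perm.SameCycle.refl σ i, hiS⟩
      set m0 := c.support.min' (hne c hc) with hm0
      have hjs : ∀ j ∈ c.support, j ≠ m0 → j ∈ s := by
        intro j hj hjne
        refine Finset.mem_sdiff.mpr ⟨hsupp_le c hc j hj, fun hjreps => ?_⟩
        obtain ⟨c', _, hc'⟩ := Finset.mem_image.mp hjreps
        have h1 : j ∈ c'.1.support := hc' ▸ Finset.min'_mem _ _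
        have hcc : c'.1 = c := (Equiv.Perm.cycle_is_cycleOf h1 c'.2).trans
          (Equiv.Perm.cycle_is_cycleOf hj hc).symm
        exact hjne (by rw [← hc', hm0]; congr 1 ; rw [hcc])
      by_cases him : i = m0
      · -- the rows over the cycle sum to zero
        have hMc : ∀ j ∈ c.support, M j = B.row (c j) - B.row j := by
          intro j hj
          funext j'
          have := (Equiv.Perm.mem_cycleFactorsFinset_iff.mp hc).2 j hj
          simp [hMdef, this, Matrix.row]
        have hsum0 : ∑ j ∈ c.support, M j = 0 := by
          rw [Finset.sum_congr rfl hMc, Finset.sum_sub_distrib, sub_eq_zero]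
          refine Finset.sum_nbij' (fun j => c j) (fun j => c⁻¹ j) ?_ ?_ ?_ ?_ ?_
          · intro a ha; exact Equiv.Perm.apply_mem_support.mpr ha
          · intro a ha
            have ha' : a ∈ c⁻¹.support := by rwa [Equiv.Perm.support_inv]
            have h := Equiv.Perm.apply_mem_support.mpr ha'
            rwa [Equiv.Perm.support_inv] at h
          · intro a _; simp
          · intro a _; simp
          · intro a _; rfl
        have heq : M i = -∑ j ∈ c.support.erase i, M j := by
          have h2 := Finset.add_sum_erase _ M hisup
          rw [hsum0] at h2
          exact eq_neg_of_add_eq_zero_left h2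
        rw [heq]
        refine neg_mem (Submodule.sum_mem _ fun j hj => Submodule.subset_span ⟨j, ?_, rfl⟩)
        exact hjs j (Finset.mem_of_mem_erase hj) (him ▸ Finset.ne_of_mem_erase hj)
      · exact Submodule.subset_span ⟨i, hjs i hisup him, rfl⟩
  -- conclude
  calc M.rank = finrank ℝ (span ℝ (Set.range M)) := Matrix.rank_eq_finrank_span_row M
    _ ≤ finrank ℝ (span ℝ (M '' ↑s)) :=
        Submodule.finrank_mono (span_le.mpr (Set.range_subset_iff.mpr hrow))
    _ = finrank ℝ (span ℝ ((s.image M.row : Finset (Fin k → ℝ)) : Set (Fin k → ℝ))) := by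
        rw [Finset.coe_image]; rfl
    _ ≤ (s.image M).card := finrank_span_finset_le_card _
    _ ≤ s.card := Finset.card_image_le
    _ = hammingWeight σ - cycleNumber σ := hcard

end Aux

open Submodule Module in
/-- For `M = [A, B_1, ..., B_d]` with `rank M = r`, `rank A = r_A`, `rank B_l = r_{B_l}`,
and any permutation matrices `P_1, ..., P_d`,
`rank [A, P_1 B_1, ..., P_d B_d] ≤ min {n, m, r_A + Σ r_{B_l}, r + Σ (H(π_{P_l}) − C(π_{P_l}))}`. -/
theorem rank_multi_perm_concat_le {n mA d m r rA : ℕ} {mB : Fin d → ℕ}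
    (A : Matrix (Fin n) (Fin mA) ℝ) (B : ∀ l : Fin d, Matrix (Fin n) (Fin (mB l)) ℝ)
    (rB : Fin d → ℕ)
    (hm : m = mA + ∑ l, mB l)
    (hr : (Matrix.of fun i (j : Fin mA ⊕ (Σ l : Fin d, Fin (mB l))) =>
      Sum.elim (A i) (fun p => B p.1 i p.2) j).rank = r)
    (hrA : A.rank = rA) (hrB : ∀ l, (B l).rank = rB l)
    (σ : Fin d → Equiv.Perm (Fin n)) :
    (Matrix.of fun i (j : Fin mA ⊕ (Σ l : Fin d, Fin (mB l))) =>
        Sum.elim (A i) (fun p => B p.1 (σ p.1 i) p.2) j).rank ≤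
      min (min n m)
        (min (rA + ∑ l, rB l) (r + ∑ l, (hammingWeight (σ l) - cycleNumber (σ l)))) := by
  classical
  set N : Matrix (Fin n) (Fin mA ⊕ (Σ l : Fin d, Fin (mB l))) ℝ :=
    Matrix.of fun i j => Sum.elim (A i) (fun p => B p.1 (σ p.1 i) p.2) j with hN
  set M : Matrix (Fin n) (Fin mA ⊕ (Σ l : Fin d, Fin (mB l))) ℝ :=
    Matrix.of fun i j => Sum.elim (A i) (fun p => B p.1 i p.2) j with hM
  refine le_min (le_min ?_ ?_) (le_min ?_ ?_)
  · -- rank ≤ n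
    simpa using N.rank_le_card_height
  · -- rank ≤ m
    rw [hm]
    simpa [Fintype.card_sigma] using N.rank_le_card_width
  · -- rank ≤ rA + ∑ rB
    set W0 : Submodule ℝ (Fin n → ℝ) := span ℝ (Set.range Aᵀ) with hW0
    set Wl : Fin d → Submodule ℝ (Fin n → ℝ) :=
      fun l => span ℝ (Set.range ((B l).submatrix (σ l) id)ᵀ) with hWl
    have hmem : ∀ j, Nᵀ j ∈ W0 ⊔ Finset.univ.sup Wl := by
      rintro (j | ⟨l, j⟩)
      · exact Submodule.mem_sup_left (subset_span ⟨j, rfl⟩)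
      · have hle : Wl l ≤ Finset.univ.sup Wl := Finset.le_sup (Finset.mem_univ l)
        exact Submodule.mem_sup_right (hle (subset_span ⟨j, rfl⟩))
    calc N.rank ≤ finrank ℝ (W0 ⊔ Finset.univ.sup Wl : Submodule ℝ (Fin n → ℝ)) :=
          rank_le_finrank_of_cols N _ hmem
      _ ≤ finrank ℝ W0 + finrank ℝ (Finset.univ.sup Wl : Submodule ℝ (Fin n → ℝ)) :=
          Submodule.finrank_add_le_finrank_add_finrank _ _
      _ ≤ finrank ℝ W0 + ∑ l, finrank ℝ (Wl l) := by
          exact add_le_add_right (finrank_finsetSup_le _ _) _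
      _ = rA + ∑ l, rB l := by
          congr 1
          · rw [hW0]; exact (Matrix.rank_eq_finrank_span_cols A).symm.trans hrA
          · refine Finset.sum_congr rfl fun l _ => ?_
            rw [hWl]; exact (Matrix.rank_eq_finrank_span_cols _).symm.trans ((rank_rowperm _ _).trans (hrB l))
  · -- rank ≤ r + ∑ (H - C)
    set D : ∀ l : Fin d, Matrix (Fin n) (Fin (mB l)) ℝ :=
      fun l => Matrix.of fun i j => B l (σ l i) j - B l i j with hD
    set W0 : Submodule ℝ (Fin n → ℝ) := span ℝ (Set.range Mᵀ) with hW0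
    set Wl : Fin d → Submodule ℝ (Fin n → ℝ) :=
      fun l => span ℝ (Set.range (D l)ᵀ) with hWl
    have hmem : ∀ j, Nᵀ j ∈ W0 ⊔ Finset.univ.sup Wl := by
      rintro (j | ⟨l, j⟩)
      · exact Submodule.mem_sup_left (subset_span ⟨Sum.inl j, rfl⟩)
      · have hkey : Nᵀ (Sum.inr ⟨l, j⟩) = Mᵀ (Sum.inr ⟨l, j⟩) + (D l)ᵀ j := by
          funext i
          show N i (Sum.inr ⟨l, j⟩) = M i (Sum.inr ⟨l, j⟩) + D l i j
          simp only [hN, hM, hD, Matrix.of_apply, Sum.elim_inr]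
          ring
        rw [hkey]
        have hle : Wl l ≤ Finset.univ.sup Wl := Finset.le_sup (Finset.mem_univ l)
        exact add_mem (Submodule.mem_sup_left (subset_span ⟨Sum.inr ⟨l, j⟩, rfl⟩))
          (Submodule.mem_sup_right (hle (subset_span ⟨j, rfl⟩)))
    calc N.rank ≤ finrank ℝ (W0 ⊔ Finset.univ.sup Wl : Submodule ℝ (Fin n → ℝ)) :=
          rank_le_finrank_of_cols N _ hmem
      _ ≤ finrank ℝ W0 + finrank ℝ (Finset.univ.sup Wl : Submodule ℝ (Fin n → ℝ)) :=
          Submodule.finrank_add_le_finrank_add_finrank _ _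
      _ ≤ finrank ℝ W0 + ∑ l, finrank ℝ (Wl l) := by
          exact add_le_add_right (finrank_finsetSup_le _ _) _
      _ ≤ r + ∑ l, (hammingWeight (σ l) - cycleNumber (σ l)) := by
          refine add_le_add ?_ (Finset.sum_le_sum fun l _ => ?_)
          · rw [hW0]; exact ((Matrix.rank_eq_finrank_span_cols M).symm.trans hr).le
          · rw [hWl]
            exact ((Matrix.rank_eq_finrank_span_cols (D l)).symm).le.trans (rank_perm_sub_le (σ l) (B l))
end
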